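/- Let f be any function from the integers to an additive commutative group. Then ∑_{n ∈ NR} [f(n+a) − f(n)] = ∑_{n ∈ N} f(n) − ∑_{n=1}^{a−1} f(n). -/

import Mathlib

/-- Theorem 1 of the paper: for any function `f` into an additive commutative
group, `∑_{n ∈ NR} [f(n+a) − f(n)] = ∑_{n ∈ N} f(n) − ∑_{n=1}^{a−1} f(n)`. -/
theorem frobenius_characterization {G : Type*} [AddCommGroup G]
    (k : ℕ) (a : Fin k → ℕ) (ha : ∀ i, 0 < a i)
    (hgcd : Finset.univ.gcd a = 1)
    (A : ℕ) (hA : 2 ≤ A) (hAmem : ∃ i, a i = A)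
    (NR N : Finset ℕ)
    (hNR : ∀ n : ℕ, n ∈ NR ↔ 0 < n ∧ ¬ ∃ x : Fin k → ℕ, n = ∑ i, a i * x i)
    (hN : ∀ n : ℕ, n ∈ N ↔ 0 < n ∧ (∃ x : Fin k → ℕ, n = ∑ i, a i * x i) ∧
      ¬ ∃ x : Fin k → ℕ, (n : ℤ) - (A : ℤ) = ∑ i, (a i : ℤ) * (x i : ℤ))
    (f : ℤ → G) :
    ∑ n ∈ NR, (f ((n : ℤ) + (A : ℤ)) - f (n : ℤ)) =
      ∑ n ∈ N, f (n : ℤ) - ∑ n ∈ Finset.Icc 1 (A - 1), f (n : ℤ) := by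
  classical
  obtain ⟨i₀, hi₀⟩ := hAmem
  set rep : ℕ → Prop := fun m => ∃ x : Fin k → ℕ, m = ∑ i, a i * x i with hrepdef
  have F0 : rep 0 := ⟨0, by simp⟩
  have F2 : ∀ m, rep m → rep (m + A) := by
    rintro m ⟨x, hx⟩
    refine ⟨fun j => x j + if j = i₀ then 1 else 0, ?_⟩
    have h : ∀ j, a j * (x j + if j = i₀ then 1 else 0)
        = a j * x j + if j = i₀ then a j else 0 := by
      intro j; by_cases h : j = i₀ <;> simp [h, Nat.mul_add]
    simp only [h, Finset.sum_add_distrib, Finset.sum_ite_eq', Finset.mem_univ,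
      if_true, hi₀, ← hx]
  have F3 : ∀ m : ℕ, (∃ x : Fin k → ℕ, (m:ℤ) - (A:ℤ) = ∑ i, (a i:ℤ) * (x i:ℤ)) ↔
      (A ≤ m ∧ rep (m - A)) := by
    intro m
    constructor
    · rintro ⟨x, hx⟩
      have hnonneg : (0:ℤ) ≤ (m:ℤ) - A := by
        rw [hx]; exact Finset.sum_nonneg fun i _ => by positivity
      have hAm : A ≤ m := by exact_mod_cast (by linarith : (A:ℤ) ≤ (m:ℤ))
      refine ⟨hAm, ⟨x, ?_⟩⟩
      have h2 : ((m - A : ℕ) : ℤ) = ∑ i, ((a i * x i : ℕ) : ℤ) := by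
        push_cast [Nat.cast_sub hAm]
        rw [hx]
      exact_mod_cast h2
    · rintro ⟨hAm, x, hx⟩
      refine ⟨x, ?_⟩
      have h2 : ((m - A : ℕ) : ℤ) = ((∑ i, a i * x i : ℕ) : ℤ) := congrArg (Nat.cast : ℕ → ℤ) hx
      rw [Nat.cast_sub hAm] at h2
      rw [h2]; push_cast; ring
  have himg : ∀ m : ℕ, (m ∈ NR.image (· + A)) ↔ (A < m ∧ ¬ rep (m - A)) := by
    intro m
    simp only [Finset.mem_image, hNR]
    constructor
    · rintro ⟨n, ⟨hn, hnr⟩, rfl⟩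
      refine ⟨by omega, ?_⟩
      rw [Nat.add_sub_cancel]
      exact hnr
    · rintro ⟨h1, h2⟩
      exact ⟨m - A, ⟨by omega, h2⟩, by omega⟩
  have hrepA : rep A := by simpa using F2 0 F0
  have hkey : NR ∪ N = NR.image (· + A) ∪ Finset.Icc 1 (A-1) := by
    ext m
    simp only [Finset.mem_union, hNR, hN, F3, himg, Finset.mem_Icc]
    show (0 < m ∧ ¬ rep m) ∨ (0 < m ∧ rep m ∧ ¬(A ≤ m ∧ rep (m - A))) ↔
      (A < m ∧ ¬ rep (m - A)) ∨ (1 ≤ m ∧ m ≤ A - 1)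
    rcases lt_trichotomy m A with hm | hm | hm
    · -- m < A
      have h1 : ¬ A < m := by omega
      have h2 : ¬ A ≤ m := by omega
      have h3 : (1 ≤ m ∧ m ≤ A - 1) ↔ 0 < m := by omega
      rw [h3]
      by_cases hr : rep m <;> tauto
    · -- m = A
      subst hm
      have h1 : ¬ m < m := lt_irrefl m
      have h2 : ¬ (1 ≤ m ∧ m ≤ m - 1) := by omega
      have h3 : rep (m - m) := by simpa using F0
      have h4 : rep m := hrepA
      tauto
    · -- A < m
      have h1 : ¬ (1 ≤ m ∧ m ≤ A - 1) := by omega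
      have h2 : A ≤ m := le_of_lt hm
      have h5 : 0 < m := by omega
      by_cases hr : rep (m - A)
      · have h6 : rep m := by
          have := F2 _ hr
          rwa [Nat.sub_add_cancel h2] at this
        tauto
      · by_cases hrm : rep m <;> tauto
  have hd1 : Disjoint NR N := by
    rw [Finset.disjoint_left]
    intro x hx hx'
    rw [hNR x] at hx; rw [hN x] at hx'
    tauto
  have hd2 : Disjoint (NR.image (· + A)) (Finset.Icc 1 (A-1)) := by
    rw [Finset.disjoint_left]
    intro x hx hx'
    rw [himg x] at hx
    rw [Finset.mem_Icc] at hx'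
    omega
  have hsum : (∑ n ∈ NR, f ((n:ℤ) + (A:ℤ))) + ∑ n ∈ Finset.Icc 1 (A-1), f (n:ℤ)
      = (∑ n ∈ N, f (n:ℤ)) + ∑ n ∈ NR, f (n:ℤ) := by
    have this : (∑ n ∈ NR ∪ N, f (n:ℤ))
        = ∑ n ∈ NR.image (· + A) ∪ Finset.Icc 1 (A-1), f (n:ℤ) := by rw [hkey]
    rw [Finset.sum_union hd1, Finset.sum_union hd2,
      Finset.sum_image (by intro x _ y _ h; simp only at h; omega)] at this
    have hcast : ∀ n ∈ NR, f (((n + A : ℕ)):ℤ) = f ((n:ℤ) + (A:ℤ)) := by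
      intro n _; push_cast; ring_nf
    rw [Finset.sum_congr rfl hcast] at this
    rw [← this]; abel
  rw [Finset.sum_sub_distrib, sub_eq_sub_iff_add_eq_add]
  exact hsum
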